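/- Under condition C1, the map θ ↦ G_θ(x) is Lipschitz on Θ uniformly in x ∈ ℝ: there exists c ≥ 0 such that |G_θ(x) − G_{θ′}(x)| ≤ c |θ − θ′|₂ for all θ, θ′ ∈ Θ and all x ∈ ℝ; consequently the contrast function K is Lipschitz on Θ: there exists C ≥ 0 such that |K(θ) − K(θ′)| ≤ C |θ − θ′|₂ for all θ, θ′ ∈ Θ. -/

import Mathlib

open MeasureTheory

/-- The mixing operator `A_θ`. -/
noncomputable def Aop (lam mu₁ mu₂ : ℝ) (H : ℝ → ℝ) (x : ℝ) : ℝ :=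
  lam * H (x - mu₁) + (1 - lam) * H (x - mu₂)

/-- The inverse mixing operator `A_θ⁻¹`, defined by the geometric series. -/
noncomputable def Ainv (lam mu₁ mu₂ : ℝ) (H : ℝ → ℝ) (x : ℝ) : ℝ :=
  (1 / (1 - lam)) * ∑' k : ℕ, (-lam / (1 - lam)) ^ k * H (x + mu₂ + (k : ℝ) * (mu₂ - mu₁))

/-- The symmetry operator `S_r`. -/
noncomputable def Sr (H : ℝ → ℝ) (x : ℝ) : ℝ := 1 - H (-x)

/-- Euclidean norm on `ℝ³ = ℝ × ℝ × ℝ`. -/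
noncomputable def enorm3 (θ : ℝ × ℝ × ℝ) : ℝ :=
  Real.sqrt (θ.1 ^ 2 + θ.2.1 ^ 2 + θ.2.2 ^ 2)

lemma pow_abs_sub_le {ρ a b : ℝ} (ha : |a| ≤ ρ) (hb : |b| ≤ ρ) (k : ℕ) :
    |a ^ k - b ^ k| ≤ k * ρ ^ (k - 1) * |a - b| := by
  have hρ : 0 ≤ ρ := le_trans (abs_nonneg a) ha
  induction k with
  | zero => simp
  | succ n ih =>
    have h1 : a ^ (n+1) - b ^ (n+1) = a * (a ^ n - b ^ n) + (a - b) * b ^ n := by ring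
    rw [h1]
    have h2 : |a * (a ^ n - b ^ n) + (a - b) * b ^ n|
        ≤ |a| * |a ^ n - b ^ n| + |a - b| * |b| ^ n := by
      refine (abs_add_le _ _).trans (le_of_eq ?_)
      rw [abs_mul, abs_mul, abs_pow]
    refine h2.trans ?_
    have h3 : |a| * |a ^ n - b ^ n| ≤ n * ρ ^ n * |a - b| := by
      calc |a| * |a ^ n - b ^ n| ≤ ρ * (n * ρ ^ (n-1) * |a - b|) :=
            mul_le_mul ha ih (abs_nonneg _) hρ
        _ ≤ n * ρ ^ n * |a - b| := by
            rcases n with _ | m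
            · simp
            · apply le_of_eq; rw [Nat.add_sub_cancel]; ring
    have h4 : |a - b| * |b| ^ n ≤ ρ ^ n * |a - b| := by
      rw [mul_comm]
      exact mul_le_mul_of_nonneg_right (pow_le_pow_left₀ (abs_nonneg b) hb n) (abs_nonneg _)
    have h5 : (↑(n+1) : ℝ) * ρ ^ (n + 1 - 1) * |a - b| = n * ρ ^ n * |a-b| + ρ ^ n * |a-b| := by
      rw [Nat.add_sub_cancel]; push_cast; ring
    rw [h5]
    exact add_le_add h3 h4

lemma summable_kgeo {ρ : ℝ} (hρ0 : 0 ≤ ρ) (hρ1 : ρ < 1) :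
    Summable (fun k : ℕ => (k : ℝ) * ρ ^ k) := by
  have := summable_pow_mul_geometric_of_norm_lt_one (R := ℝ) 1 (r := ρ)
    (by rwa [Real.norm_eq_abs, abs_of_nonneg hρ0])
  simpa using this

lemma summable_kgeo' {ρ : ℝ} (hρ0 : 0 < ρ) (hρ1 : ρ < 1) :
    Summable (fun k : ℕ => (k : ℝ) * ρ ^ (k - 1)) := by
  have h : (fun k : ℕ => (k : ℝ) * ρ ^ (k-1)) = fun k : ℕ => ρ⁻¹ * ((k:ℝ) * ρ ^ k) := by
    funext k
    rcases k with _ | m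
    · simp
    · rw [Nat.add_sub_cancel, pow_succ]
      field_simp
  rw [h]
  exact (summable_kgeo hρ0.le hρ1).mul_left _

section
variable {G : ℝ → ℝ} {Lr ρ : ℝ}

lemma summable_ck (hL0 : 0 ≤ Lr) (hρ0 : 0 < ρ) (hρ1 : ρ < 1) :
    Summable (fun k : ℕ =>
      (4 + 2*Lr) * ρ^k + 8 * ((k:ℝ) * ρ^(k-1)) + 2*Lr * ((k:ℝ) * ρ^k)) :=
  (((summable_geometric_of_lt_one hρ0.le hρ1).mul_left _).add
    ((summable_kgeo' hρ0 hρ1).mul_left _)).add ((summable_kgeo hρ0.le hρ1).mul_left _)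

lemma ck_nonneg (hL0 : 0 ≤ Lr) (hρ0 : 0 < ρ) (k : ℕ) :
    0 ≤ (4 + 2*Lr) * ρ^k + 8 * ((k:ℝ) * ρ^(k-1)) + 2*Lr * ((k:ℝ) * ρ^k) := by
  have := hρ0.le
  positivity

lemma ainv_bound {G : ℝ → ℝ} {ρ : ℝ} (hGb : ∀ x, |G x| ≤ 1) (hρ0 : 0 ≤ ρ) (hρ1 : ρ < 1)
    {lam : ℝ} (mu₁ mu₂ x : ℝ)
    (hA : |1 / (1 - lam)| ≤ 2) (hq : |(-lam / (1 - lam))| ≤ ρ) :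
    |Ainv lam mu₁ mu₂ G x| ≤ 2 * ∑' k : ℕ, ρ ^ k := by
  set q := -lam / (1 - lam) with hqdef
  have hgeo : Summable (fun k : ℕ => ρ ^ k) := summable_geometric_of_lt_one hρ0 hρ1
  have hterm : ∀ k : ℕ, ‖q ^ k * G (x + mu₂ + (k : ℝ) * (mu₂ - mu₁))‖ ≤ ρ ^ k := by
    intro k
    rw [Real.norm_eq_abs, abs_mul, abs_pow]
    calc |q| ^ k * |G _| ≤ ρ ^ k * 1 :=
          mul_le_mul (pow_le_pow_left₀ (abs_nonneg _) hq k) (hGb _) (abs_nonneg _)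
            (pow_nonneg hρ0 k)
      _ = ρ ^ k := mul_one _
  have hnorm : Summable (fun k : ℕ => ‖q ^ k * G (x + mu₂ + (k : ℝ) * (mu₂ - mu₁))‖) :=
    Summable.of_nonneg_of_le (fun k => norm_nonneg _) hterm hgeo
  rw [Ainv, abs_mul]
  calc |1/(1-lam)| * |∑' k : ℕ, q ^ k * G (x + mu₂ + (k : ℝ) * (mu₂ - mu₁))|
      ≤ 2 * ∑' k : ℕ, ρ ^ k := by
        apply mul_le_mul hA _ (abs_nonneg _) (by norm_num)
        calc |∑' k : ℕ, q ^ k * G (x + mu₂ + (k : ℝ) * (mu₂ - mu₁))|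
            ≤ ∑' k : ℕ, ‖q ^ k * G (x + mu₂ + (k : ℝ) * (mu₂ - mu₁))‖ :=
              norm_tsum_le_tsum_norm hnorm
          _ ≤ ∑' k : ℕ, ρ ^ k := Summable.tsum_le_tsum hterm hnorm hgeo

lemma ainv_diff (hGb : ∀ x, |G x| ≤ 1) (hGL : ∀ x y, |G x - G y| ≤ Lr * |x - y|)
    (hL0 : 0 ≤ Lr) (hρ0 : 0 < ρ) (hρ1 : ρ < 1)
    {lam lam' : ℝ} (mu₁ mu₂ mu₁' mu₂' x x' : ℝ)
    (hA : |1/(1-lam)| ≤ 2) (hA' : |1/(1-lam')| ≤ 2)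
    (hq : |(-lam/(1-lam))| ≤ ρ) (hq' : |(-lam'/(1-lam'))| ≤ ρ)
    (hqq : |(-lam/(1-lam)) - (-lam'/(1-lam'))| ≤ 4 * |lam - lam'|)
    (hAA : |1/(1-lam) - 1/(1-lam')| ≤ 4 * |lam - lam'|) :
    |Ainv lam mu₁ mu₂ G x - Ainv lam' mu₁' mu₂' G x'| ≤
      (∑' k : ℕ, ((4 + 2*Lr) * ρ^k + 8 * ((k:ℝ) * ρ^(k-1)) + 2*Lr * ((k:ℝ) * ρ^k))) *
        (|lam - lam'| + |mu₁ - mu₁'| + |mu₂ - mu₂'| + |x - x'|) := by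
  set q := -lam/(1-lam) with hqdef
  set q' := -lam'/(1-lam') with hq'def
  set A := 1/(1-lam) with hAdef
  set A' := 1/(1-lam') with hA'def
  set e := |lam - lam'| + |mu₁ - mu₁'| + |mu₂ - mu₂'| + |x - x'| with hedef
  have he0 : 0 ≤ e := by positivity
  have hdl : |lam - lam'| ≤ e := by
    have h1 : (0:ℝ) ≤ |mu₁ - mu₁'| := abs_nonneg _
    have h2 : (0:ℝ) ≤ |mu₂ - mu₂'| := abs_nonneg _
    have h3 : (0:ℝ) ≤ |x - x'| := abs_nonneg _
    simp only [hedef]; linarith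
  set f := fun k : ℕ => A * (q ^ k * G (x + mu₂ + (k:ℝ) * (mu₂ - mu₁))) with hfdef
  set f' := fun k : ℕ => A' * (q' ^ k * G (x' + mu₂' + (k:ℝ) * (mu₂' - mu₁'))) with hf'def
  set c := fun k : ℕ =>
      (4 + 2*Lr) * ρ^k + 8 * ((k:ℝ) * ρ^(k-1)) + 2*Lr * ((k:ℝ) * ρ^k) with hcdef
  have hterm : ∀ k : ℕ, ‖f k - f' k‖ ≤ c k * e := by
    intro k
    set u := x + mu₂ + (k:ℝ) * (mu₂ - mu₁) with hudef
    set u' := x' + mu₂' + (k:ℝ) * (mu₂' - mu₁') with hu'def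
    have hkey : f k - f' k = (A*q^k - A'*q'^k) * G u + (A'*q'^k) * (G u - G u') := by
      simp only [hfdef, hf'def]; ring
    have hsplit : ‖f k - f' k‖ ≤ |A*q^k - A'*q'^k| * |G u| + |A'| * |q'| ^ k * |G u - G u'| := by
      rw [Real.norm_eq_abs, hkey]
      refine (abs_add_le _ _).trans (le_of_eq ?_)
      rw [abs_mul, abs_mul, abs_mul, abs_pow]
    have h1 : |A*q^k - A'*q'^k| ≤ 4*|lam-lam'| *ρ^k + 8*((k:ℝ)*ρ^(k-1))*|lam-lam'| := by
      have hk2 : A*q^k - A'*q'^k = (A - A')*q^k + A'*(q^k - q'^k) := by ring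
      rw [hk2]
      refine (abs_add_le _ _).trans ?_
      rw [abs_mul, abs_mul, abs_pow]
      have b1 : |A - A'| * |q|^k ≤ (4*|lam-lam'|) * ρ^k :=
        mul_le_mul hAA (pow_le_pow_left₀ (abs_nonneg _) hq k) (pow_nonneg (abs_nonneg _) k)
          (by positivity)
      have b2 : |A'| * |q^k - q'^k| ≤ 2 * ((k:ℝ)*ρ^(k-1)*(4*|lam-lam'|)) := by
        refine mul_le_mul hA' ?_ (abs_nonneg _) (by norm_num)
        refine (pow_abs_sub_le hq hq' k).trans ?_
        have hnn : (0:ℝ) ≤ (k:ℝ)*ρ^(k-1) := by positivity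
        exact mul_le_mul_of_nonneg_left hqq hnn
      calc |A - A'| * |q|^k + |A'| * |q^k - q'^k|
          ≤ (4*|lam-lam'|) * ρ^k + 2 * ((k:ℝ)*ρ^(k-1)*(4*|lam-lam'|)) := add_le_add b1 b2
        _ = 4*|lam-lam'| *ρ^k + 8*((k:ℝ)*ρ^(k-1))*|lam-lam'| := by ring
    have hu : |u - u'| ≤ (|x - x'| + |mu₂ - mu₂'|) + (k:ℝ)*(|mu₁ - mu₁'| + |mu₂ - mu₂'|) := by
      have hk3 : u - u' = ((x - x') + (mu₂ - mu₂')) + (k:ℝ)*((mu₂ - mu₂') - (mu₁ - mu₁')) := by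
        simp only [hudef, hu'def]; ring
      rw [hk3]
      refine (abs_add_le _ _).trans ?_
      have b3 : |(x - x') + (mu₂ - mu₂')| ≤ |x - x'| + |mu₂ - mu₂'| := abs_add_le _ _
      have b4 : |(k:ℝ)*((mu₂ - mu₂') - (mu₁ - mu₁'))| ≤ (k:ℝ)*(|mu₁ - mu₁'| + |mu₂ - mu₂'|) := by
        rw [abs_mul, Nat.abs_cast]
        refine mul_le_mul_of_nonneg_left ?_ (Nat.cast_nonneg k)
        refine (abs_sub _ _).trans (by linarith)
      exact add_le_add b3 b4
    have h2 : |A'| * |q'| ^ k * |G u - G u'| ≤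
        2*ρ^k * (Lr * ((|x - x'| + |mu₂ - mu₂'|) + (k:ℝ)*(|mu₁ - mu₁'| + |mu₂ - mu₂'|))) := by
      refine mul_le_mul ?_ ((hGL u u').trans (mul_le_mul_of_nonneg_left hu hL0))
        (abs_nonneg _) (by positivity)
      exact mul_le_mul hA' (pow_le_pow_left₀ (abs_nonneg _) hq' k)
        (pow_nonneg (abs_nonneg _) k) (by norm_num)
    have hGu : |G u| ≤ 1 := hGb u
    have htot : ‖f k - f' k‖ ≤
        (4*|lam-lam'| *ρ^k + 8*((k:ℝ)*ρ^(k-1))*|lam-lam'|) * 1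
        + 2*ρ^k * (Lr * ((|x - x'| + |mu₂ - mu₂'|) + (k:ℝ)*(|mu₁ - mu₁'| + |mu₂ - mu₂'|))) := by
      refine hsplit.trans (add_le_add ?_ h2)
      exact mul_le_mul h1 hGu (abs_nonneg _) (by positivity)
    refine htot.trans ?_
    have hs1 : |x - x'| + |mu₂ - mu₂'| ≤ e := by
      have := abs_nonneg (lam - lam'); have := abs_nonneg (mu₁ - mu₁')
      simp only [hedef]; linarith
    have hs2 : |mu₁ - mu₁'| + |mu₂ - mu₂'| ≤ e := by
      have := abs_nonneg (lam - lam'); have := abs_nonneg (x - x')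
      simp only [hedef]; linarith
    simp only [hcdef]
    calc (4*|lam-lam'| *ρ^k + 8*((k:ℝ)*ρ^(k-1))*|lam-lam'|) * 1
        + 2*ρ^k * (Lr * ((|x - x'| + |mu₂ - mu₂'|) + (k:ℝ)*(|mu₁ - mu₁'| + |mu₂ - mu₂'|)))
        = 4*ρ^k*|lam-lam'| + 8*((k:ℝ)*ρ^(k-1))*|lam-lam'|
          + 2*Lr*ρ^k*(|x - x'| + |mu₂ - mu₂'|)
          + 2*Lr*((k:ℝ)*ρ^k)*(|mu₁ - mu₁'| + |mu₂ - mu₂'|) := by ring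
      _ ≤ 4*ρ^k*e + 8*((k:ℝ)*ρ^(k-1))*e + 2*Lr*ρ^k*e + 2*Lr*((k:ℝ)*ρ^k)*e := by
          have c1 : (0:ℝ) ≤ 4*ρ^k := by positivity
          have c2 : (0:ℝ) ≤ 8*((k:ℝ)*ρ^(k-1)) := by positivity
          have c3 : (0:ℝ) ≤ 2*Lr*ρ^k := by positivity
          have c4 : (0:ℝ) ≤ 2*Lr*((k:ℝ)*ρ^k) := by positivity
          exact add_le_add (add_le_add (add_le_add
            (mul_le_mul_of_nonneg_left hdl c1)
            (mul_le_mul_of_nonneg_left hdl c2))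
            (mul_le_mul_of_nonneg_left hs1 c3))
            (mul_le_mul_of_nonneg_left hs2 c4)
      _ = ((4+2*Lr)*ρ^k + 8*((k:ℝ)*ρ^(k-1)) + 2*Lr*((k:ℝ)*ρ^k)) * e := by ring
  -- summability facts
  have hgeo : Summable (fun k : ℕ => ρ ^ k) := summable_geometric_of_lt_one hρ0.le hρ1
  have hfb : ∀ k : ℕ, ‖f k‖ ≤ 2 * ρ ^ k := by
    intro k
    simp only [hfdef, Real.norm_eq_abs, abs_mul, abs_pow]
    calc |A| * (|q| ^ k * |G (x + mu₂ + (k:ℝ) * (mu₂ - mu₁))|) ≤ 2 * (ρ ^ k * 1) := by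
          refine mul_le_mul hA ?_ (by positivity) (by norm_num)
          exact mul_le_mul (pow_le_pow_left₀ (abs_nonneg _) hq k) (hGb _) (abs_nonneg _)
            (by positivity)
      _ = 2 * ρ ^ k := by ring
  have hf'b : ∀ k : ℕ, ‖f' k‖ ≤ 2 * ρ ^ k := by
    intro k
    simp only [hf'def, Real.norm_eq_abs, abs_mul, abs_pow]
    calc |A'| * (|q'| ^ k * |G (x' + mu₂' + (k:ℝ) * (mu₂' - mu₁'))|) ≤ 2 * (ρ ^ k * 1) := by
          refine mul_le_mul hA' ?_ (by positivity) (by norm_num)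
          exact mul_le_mul (pow_le_pow_left₀ (abs_nonneg _) hq' k) (hGb _) (abs_nonneg _)
            (by positivity)
      _ = 2 * ρ ^ k := by ring
  have hfs : Summable f := Summable.of_norm
    (Summable.of_nonneg_of_le (fun k => norm_nonneg _) hfb (hgeo.mul_left 2))
  have hf's : Summable f' := Summable.of_norm
    (Summable.of_nonneg_of_le (fun k => norm_nonneg _) hf'b (hgeo.mul_left 2))
  have hcs : Summable c := summable_ck hL0 hρ0 hρ1
  have hds : Summable (fun k => ‖f k - f' k‖) :=
    Summable.of_nonneg_of_le (fun k => norm_nonneg _) hterm (hcs.mul_right e)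
  have hAinv : Ainv lam mu₁ mu₂ G x = ∑' k : ℕ, f k := by
    simp only [Ainv, ← tsum_mul_left]
    rfl
  have hAinv' : Ainv lam' mu₁' mu₂' G x' = ∑' k : ℕ, f' k := by
    simp only [Ainv, ← tsum_mul_left]
    rfl
  rw [hAinv, hAinv', ← Summable.tsum_sub hfs hf's]
  calc |∑' k : ℕ, (f k - f' k)| ≤ ∑' k : ℕ, ‖f k - f' k‖ := norm_tsum_le_tsum_norm hds
    _ ≤ ∑' k : ℕ, c k * e := Summable.tsum_le_tsum hterm hds (hcs.mul_right e)
    _ = tsum c * e := tsum_mul_right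
end




lemma enorm3_nonneg (v : ℝ × ℝ × ℝ) : 0 ≤ enorm3 v := Real.sqrt_nonneg _

lemma enorm3_comp (v : ℝ × ℝ × ℝ) :
    |v.1| ≤ enorm3 v ∧ |v.2.1| ≤ enorm3 v ∧ |v.2.2| ≤ enorm3 v := by
  refine ⟨?_, ?_, ?_⟩ <;>
  · rw [← Real.sqrt_sq_eq_abs]
    apply Real.sqrt_le_sqrt
    nlinarith [sq_nonneg v.1, sq_nonneg v.2.1, sq_nonneg v.2.2]

set_option maxHeartbeats 2000000 in
/-- Under C1, `θ ↦ G_θ(x)` is Lipschitz on `Θ` uniformly in `x`, and the contrast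
function `K` is Lipschitz on `Θ`. -/
theorem stmt_11
    (ν : Measure ℝ) (hprob : IsProbabilityMeasure ν) (hsym : ν.map (fun x => -x) = ν)
    (F₀ : ℝ → ℝ) (hF₀ : ∀ x : ℝ, F₀ x = (ν (Set.Iic x)).toReal)
    -- condition C1
    (hmono : StrictMono F₀) (hlip : ∃ L : NNReal, LipschitzWith L F₀)
    (lam₀ mu₁₀ mu₂₀ : ℝ) (hlam₀ : lam₀ ∈ Set.Ico (0 : ℝ) (1 / 2)) (hmu₀ : mu₁₀ ≠ mu₂₀)
    (G : ℝ → ℝ) (hG : ∀ x : ℝ, G x = lam₀ * F₀ (x - mu₁₀) + (1 - lam₀) * F₀ (x - mu₂₀))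
    -- the Lebesgue–Stieltjes measure of G is the mixture measure
    (P : Measure ℝ)
    (hP : P = ENNReal.ofReal lam₀ • ν.map (fun x => x + mu₁₀)
        + ENNReal.ofReal (1 - lam₀) • ν.map (fun x => x + mu₂₀))
    (Gθ : ℝ × ℝ × ℝ → ℝ → ℝ)
    (hGθ : ∀ θ : ℝ × ℝ × ℝ, ∀ x : ℝ,
      Gθ θ x = Aop θ.1 θ.2.1 θ.2.2 (Sr (Ainv θ.1 θ.2.1 θ.2.2 G)) x)
    (K : ℝ × ℝ × ℝ → ℝ)
    (hK : ∀ θ : ℝ × ℝ × ℝ, K θ = ∫ x : ℝ, (Gθ θ x - G x) ^ 2 ∂P)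
    -- the parameter set Θ
    (d : ℝ) (hd : d ∈ Set.Ioo (0 : ℝ) (1 / 2))
    (𝒳 : Set (ℝ × ℝ)) (h𝒳c : IsCompact 𝒳) (h𝒳Δ : ∀ p ∈ 𝒳, p.1 ≠ p.2)
    (Θ : Set (ℝ × ℝ × ℝ))
    (hΘ : Θ = {θ : ℝ × ℝ × ℝ | θ.1 ∈ Set.Icc (0 : ℝ) (1 / 2 - d) ∧ θ.2 ∈ 𝒳}) :
    (∃ c : ℝ, 0 ≤ c ∧ ∀ θ ∈ Θ, ∀ θ' ∈ Θ, ∀ x : ℝ,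
        |Gθ θ x - Gθ θ' x| ≤ c * enorm3 (θ - θ')) ∧
    (∃ C : ℝ, 0 ≤ C ∧ ∀ θ ∈ Θ, ∀ θ' ∈ Θ,
        |K θ - K θ'| ≤ C * enorm3 (θ - θ')) := by
  obtain ⟨L, hL⟩ := hlip
  set Lr := (L : ℝ) with hLrdef
  have hLr0 : (0:ℝ) ≤ Lr := L.coe_nonneg
  obtain ⟨hd0, hd12⟩ := hd
  obtain ⟨hlam₀0, hlam₀12⟩ := hlam₀
  set ρ := (1/2 - d)/(1/2 + d) with hρdef
  have hρ0 : 0 < ρ := div_pos (by linarith) (by linarith)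
  have hρ1 : ρ < 1 := (div_lt_one (by linarith)).mpr (by linarith)
  -- bounds on F₀ and G
  have hF₀b : ∀ x, 0 ≤ F₀ x ∧ F₀ x ≤ 1 := by
    intro x
    rw [hF₀]
    refine ⟨ENNReal.toReal_nonneg, ?_⟩
    have h1 : ν (Set.Iic x) ≤ 1 := prob_le_one
    calc (ν (Set.Iic x)).toReal ≤ (1 : ENNReal).toReal := ENNReal.toReal_mono ENNReal.one_ne_top h1
      _ = 1 := by simp
  have hGb : ∀ x, |G x| ≤ 1 := by
    intro x
    rw [hG, abs_le]
    obtain ⟨ha1, ha2⟩ := hF₀b (x - mu₁₀)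
    obtain ⟨hb1, hb2⟩ := hF₀b (x - mu₂₀)
    constructor <;>
      nlinarith [mul_le_mul_of_nonneg_left ha2 hlam₀0,
        mul_le_mul_of_nonneg_left hb2 (by linarith : (0:ℝ) ≤ 1 - lam₀),
        mul_nonneg hlam₀0 ha1, mul_nonneg (by linarith : (0:ℝ) ≤ 1 - lam₀) hb1]
  have hF₀L : ∀ a b : ℝ, |F₀ a - F₀ b| ≤ Lr * |a - b| := by
    intro a b
    have := hL.dist_le_mul a b
    rwa [Real.dist_eq, Real.dist_eq] at this
  have hGL : ∀ x y, |G x - G y| ≤ Lr * |x - y| := by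
    intro x y
    rw [hG, hG]
    have e1 := hF₀L (x - mu₁₀) (y - mu₁₀)
    have e2 := hF₀L (x - mu₂₀) (y - mu₂₀)
    rw [show x - mu₁₀ - (y - mu₁₀) = x - y by ring] at e1
    rw [show x - mu₂₀ - (y - mu₂₀) = x - y by ring] at e2
    have hsplit : lam₀ * F₀ (x - mu₁₀) + (1 - lam₀) * F₀ (x - mu₂₀)
        - (lam₀ * F₀ (y - mu₁₀) + (1 - lam₀) * F₀ (y - mu₂₀))
        = lam₀ * (F₀ (x - mu₁₀) - F₀ (y - mu₁₀))
          + (1 - lam₀) * (F₀ (x - mu₂₀) - F₀ (y - mu₂₀)) := by ring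
    rw [hsplit]
    refine (abs_add_le _ _).trans ?_
    rw [abs_mul, abs_mul, abs_of_nonneg hlam₀0, abs_of_nonneg (by linarith : (0:ℝ) ≤ 1 - lam₀)]
    nlinarith [mul_le_mul_of_nonneg_left e1 hlam₀0,
      mul_le_mul_of_nonneg_left e2 (by linarith : (0:ℝ) ≤ 1 - lam₀),
      abs_nonneg (F₀ (x - mu₁₀) - F₀ (y - mu₁₀)), abs_nonneg (F₀ (x - mu₂₀) - F₀ (y - mu₂₀))]
  -- facts about lambda
  have lamfact : ∀ l : ℝ, 0 ≤ l → l ≤ 1/2 - d →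
      (1:ℝ)/2 ≤ 1 - l ∧ |1/(1-l)| ≤ 2 ∧ |(-l/(1-l))| ≤ ρ := by
    intro l h0 h1
    have hpos : (0:ℝ) < 1 - l := by linarith
    refine ⟨by linarith, ?_, ?_⟩
    · rw [abs_of_pos (by positivity), div_le_iff₀ hpos]
      linarith
    · rw [abs_div, abs_neg, abs_of_nonneg h0, abs_of_pos hpos, hρdef]
      exact div_le_div₀ (by linarith) h1 (by linarith) (by linarith)
  have pairfact : ∀ l l' : ℝ, 0 ≤ l → l ≤ 1/2 - d → 0 ≤ l' → l' ≤ 1/2 - d →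
      |1/(1-l) - 1/(1-l')| ≤ 4 * |l - l'| ∧
      |(-l/(1-l)) - (-l'/(1-l'))| ≤ 4 * |l - l'| := by
    intro l l' h0 h1 h0' h1'
    have hp : (0:ℝ) < 1 - l := by linarith
    have hp' : (0:ℝ) < 1 - l' := by linarith
    have hden : (1:ℝ)/4 ≤ (1-l)*(1-l') := by nlinarith
    have hdenpos : (0:ℝ) < (1-l)*(1-l') := by positivity
    constructor
    · have heq : 1/(1-l) - 1/(1-l') = (l - l')/((1-l)*(1-l')) := by
        field_simp
        ring
      rw [heq, abs_div, abs_of_pos hdenpos, div_le_iff₀ hdenpos]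
      nlinarith [abs_nonneg (l - l')]
    · have heq : -l/(1-l) - (-l'/(1-l')) = (l' - l)/((1-l)*(1-l')) := by
        field_simp
        ring
      rw [heq, abs_div, abs_of_pos hdenpos, div_le_iff₀ hdenpos, abs_sub_comm l' l]
      nlinarith [abs_nonneg (l - l')]
  -- constants
  set CH := ∑' k : ℕ, ((4 + 2*Lr) * ρ^k + 8 * ((k:ℝ) * ρ^(k-1)) + 2*Lr * ((k:ℝ) * ρ^k))
    with hCHdef
  have hCH0 : 0 ≤ CH := tsum_nonneg (fun k => ck_nonneg hLr0 hρ0 k)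
  set BH := 2 * ∑' k : ℕ, ρ^k with hBHdef
  have hBH0 : 0 ≤ BH := by
    rw [hBHdef]
    have : 0 ≤ ∑' k : ℕ, ρ^k := tsum_nonneg (fun k => pow_nonneg hρ0.le k)
    linarith
  set c₁ := 2*(1+BH) + 4*CH with hc₁def
  have hc₁0 : 0 ≤ c₁ := by rw [hc₁def]; linarith
  -- membership facts
  have hmem : ∀ θ : ℝ × ℝ × ℝ, θ ∈ Θ → 0 ≤ θ.1 ∧ θ.1 ≤ 1/2 - d := by
    intro θ hθ
    rw [hΘ] at hθ
    exact ⟨hθ.1.1, hθ.1.2⟩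
  -- uniform bound on Ainv over Θ
  have habs : ∀ θ : ℝ × ℝ × ℝ, θ ∈ Θ → ∀ y : ℝ, |Ainv θ.1 θ.2.1 θ.2.2 G y| ≤ BH := by
    intro θ hθ y
    obtain ⟨h0, h1⟩ := hmem θ hθ
    obtain ⟨_, hA, hq⟩ := lamfact θ.1 h0 h1
    rw [hBHdef]
    exact ainv_bound hGb hρ0.le hρ1 θ.2.1 θ.2.2 y hA hq
  -- the key Lipschitz estimate for Gθ
  have key : ∀ θ ∈ Θ, ∀ θ' ∈ Θ, ∀ x x' : ℝ,
      |Gθ θ x - Gθ θ' x'| ≤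
        c₁ * ((|θ.1 - θ'.1| + |θ.2.1 - θ'.2.1| + |θ.2.2 - θ'.2.2|) + |x - x'|) := by
    intro θ hθ θ' hθ' x x'
    obtain ⟨h0, h1⟩ := hmem θ hθ
    obtain ⟨h0', h1'⟩ := hmem θ' hθ'
    obtain ⟨hhalf, hA, hq⟩ := lamfact θ.1 h0 h1
    obtain ⟨hhalf', hA', hq'⟩ := lamfact θ'.1 h0' h1'
    obtain ⟨hAA, hqq⟩ := pairfact θ.1 θ'.1 h0 h1 h0' h1'
    set δ := |θ.1 - θ'.1| + |θ.2.1 - θ'.2.1| + |θ.2.2 - θ'.2.2| with hδdef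
    set D := δ + |x - x'| with hDdef
    have hδ0 : 0 ≤ δ := by positivity
    have hD0 : 0 ≤ D := by positivity
    have hΔlD : |θ.1 - θ'.1| ≤ D := by
      have := abs_nonneg (θ.2.1 - θ'.2.1); have := abs_nonneg (θ.2.2 - θ'.2.2)
      have := abs_nonneg (x - x')
      rw [hDdef, hδdef]; linarith
    -- difference of the two Ainv's at the two shifted points
    have hH : ∀ m m' : ℝ, |m - m'| ≤ δ →
        |Ainv θ.1 θ.2.1 θ.2.2 G (-(x - m)) - Ainv θ'.1 θ'.2.1 θ'.2.2 G (-(x' - m'))|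
          ≤ CH * (2 * D) := by
      intro m m' hmδ
      have hdiff := ainv_diff hGb hGL hLr0 hρ0 hρ1 θ.2.1 θ.2.2 θ'.2.1 θ'.2.2
        (-(x - m)) (-(x' - m')) hA hA' hq hq' hqq hAA
      rw [← hCHdef] at hdiff
      refine hdiff.trans ?_
      refine mul_le_mul_of_nonneg_left ?_ hCH0
      have harg : |(-(x - m)) - (-(x' - m'))| ≤ |m - m'| + |x - x'| := by
        rw [show (-(x - m)) - (-(x' - m')) = (m - m') - (x - x') by ring]
        exact abs_sub _ _
      have := abs_nonneg (x - x')
      rw [hDdef, hδdef]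
      rw [hδdef] at hmδ
      linarith [harg]
    have hH1 := hH θ.2.1 θ'.2.1 (by
      have := abs_nonneg (θ.1 - θ'.1); have := abs_nonneg (θ.2.2 - θ'.2.2)
      rw [hδdef]; linarith)
    have hH2 := hH θ.2.2 θ'.2.2 (by
      have := abs_nonneg (θ.1 - θ'.1); have := abs_nonneg (θ.2.1 - θ'.2.1)
      rw [hδdef]; linarith)
    rw [hGθ, hGθ]
    simp only [Aop, Sr]
    set a := 1 - Ainv θ.1 θ.2.1 θ.2.2 G (-(x - θ.2.1)) with hadef
    set b := 1 - Ainv θ.1 θ.2.1 θ.2.2 G (-(x - θ.2.2)) with hbdef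
    set a' := 1 - Ainv θ'.1 θ'.2.1 θ'.2.2 G (-(x' - θ'.2.1)) with ha'def
    set b' := 1 - Ainv θ'.1 θ'.2.1 θ'.2.2 G (-(x' - θ'.2.2)) with hb'def
    have hav : |a| ≤ 1 + BH := by
      rw [hadef]
      refine (abs_sub _ _).trans ?_
      have := habs θ hθ (-(x - θ.2.1))
      simp only [abs_one]
      linarith
    have hbv : |b| ≤ 1 + BH := by
      rw [hbdef]
      refine (abs_sub _ _).trans ?_
      have := habs θ hθ (-(x - θ.2.2))
      simp only [abs_one]
      linarith
    have haa' : |a - a'| ≤ CH * (2 * D) := by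
      rw [hadef, ha'def, show
        (1 - Ainv θ.1 θ.2.1 θ.2.2 G (-(x - θ.2.1)))
          - (1 - Ainv θ'.1 θ'.2.1 θ'.2.2 G (-(x' - θ'.2.1)))
        = -(Ainv θ.1 θ.2.1 θ.2.2 G (-(x - θ.2.1))
          - Ainv θ'.1 θ'.2.1 θ'.2.2 G (-(x' - θ'.2.1))) by ring, abs_neg]
      exact hH1
    have hbb' : |b - b'| ≤ CH * (2 * D) := by
      rw [hbdef, hb'def, show
        (1 - Ainv θ.1 θ.2.1 θ.2.2 G (-(x - θ.2.2)))
          - (1 - Ainv θ'.1 θ'.2.1 θ'.2.2 G (-(x' - θ'.2.2)))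
        = -(Ainv θ.1 θ.2.1 θ.2.2 G (-(x - θ.2.2))
          - Ainv θ'.1 θ'.2.1 θ'.2.2 G (-(x' - θ'.2.2))) by ring, abs_neg]
      exact hH2
    have hsplit : θ.1 * a + (1 - θ.1) * b - (θ'.1 * a' + (1 - θ'.1) * b')
        = (θ.1 - θ'.1) * a + θ'.1 * (a - a') + (-(θ.1 - θ'.1)) * b
          + (1 - θ'.1) * (b - b') := by ring
    have q1 : |(θ.1 - θ'.1) * a| ≤ D * (1 + BH) := by
      rw [abs_mul]
      exact mul_le_mul hΔlD hav (abs_nonneg _) hD0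
    have q2 : |θ'.1 * (a - a')| ≤ CH * (2 * D) := by
      rw [abs_mul, abs_of_nonneg h0']
      calc θ'.1 * |a - a'| ≤ 1 * (CH * (2 * D)) :=
            mul_le_mul (by linarith) haa' (abs_nonneg _) zero_le_one
        _ = CH * (2 * D) := one_mul _
    have q3 : |(-(θ.1 - θ'.1)) * b| ≤ D * (1 + BH) := by
      rw [abs_mul, abs_neg]
      exact mul_le_mul hΔlD hbv (abs_nonneg _) hD0
    have q4 : |(1 - θ'.1) * (b - b')| ≤ CH * (2 * D) := by
      rw [abs_mul, abs_of_nonneg (by linarith : (0:ℝ) ≤ 1 - θ'.1)]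
      calc (1 - θ'.1) * |b - b'| ≤ 1 * (CH * (2 * D)) :=
            mul_le_mul (by linarith) hbb' (abs_nonneg _) zero_le_one
        _ = CH * (2 * D) := one_mul _
    calc |θ.1 * a + (1 - θ.1) * b - (θ'.1 * a' + (1 - θ'.1) * b')|
        = |(θ.1 - θ'.1) * a + θ'.1 * (a - a') + (-(θ.1 - θ'.1)) * b
            + (1 - θ'.1) * (b - b')| := by rw [hsplit]
      _ ≤ |(θ.1 - θ'.1) * a + θ'.1 * (a - a') + (-(θ.1 - θ'.1)) * b|
            + |(1 - θ'.1) * (b - b')| := abs_add_le _ _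
      _ ≤ (|(θ.1 - θ'.1) * a + θ'.1 * (a - a')| + |(-(θ.1 - θ'.1)) * b|)
            + |(1 - θ'.1) * (b - b')| := by
          exact add_le_add (abs_add_le _ _) le_rfl
      _ ≤ ((|(θ.1 - θ'.1) * a| + |θ'.1 * (a - a')|) + |(-(θ.1 - θ'.1)) * b|)
            + |(1 - θ'.1) * (b - b')| := by
          exact add_le_add (add_le_add (abs_add_le _ _) le_rfl) le_rfl
      _ ≤ ((D * (1 + BH) + CH * (2 * D)) + D * (1 + BH)) + CH * (2 * D) := by
          exact add_le_add (add_le_add (add_le_add q1 q2) q3) q4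
      _ = c₁ * D := by rw [hc₁def]; ring
  have hen : ∀ θ θ' : ℝ × ℝ × ℝ,
      |θ.1 - θ'.1| + |θ.2.1 - θ'.2.1| + |θ.2.2 - θ'.2.2| ≤ 3 * enorm3 (θ - θ') := by
    intro θ θ'
    obtain ⟨e1, e2, e3⟩ := enorm3_comp (θ - θ')
    simp only [Prod.fst_sub, Prod.snd_sub] at e1 e2 e3
    linarith
  constructor
  · refine ⟨3 * c₁, by linarith, ?_⟩
    intro θ hθ θ' hθ' x
    have hk := key θ hθ θ' hθ' x x
    rw [sub_self, abs_zero, add_zero] at hk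
    refine hk.trans ?_
    calc c₁ * (|θ.1 - θ'.1| + |θ.2.1 - θ'.2.1| + |θ.2.2 - θ'.2.2|)
        ≤ c₁ * (3 * enorm3 (θ - θ')) := mul_le_mul_of_nonneg_left (hen θ θ') hc₁0
      _ = 3 * c₁ * enorm3 (θ - θ') := by ring
  · -- measure facts
    haveI : IsProbabilityMeasure P := by
      constructor
      rw [hP]
      have hm1 : (ν.map (fun x => x + mu₁₀)) Set.univ = 1 := by
        rw [Measure.map_apply (measurable_add_const mu₁₀) MeasurableSet.univ]
        simp
      have hm2 : (ν.map (fun x => x + mu₂₀)) Set.univ = 1 := by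
        rw [Measure.map_apply (measurable_add_const mu₂₀) MeasurableSet.univ]
        simp
      simp only [Measure.add_apply, Measure.smul_apply, smul_eq_mul, hm1, hm2, mul_one]
      rw [← ENNReal.ofReal_add hlam₀0 (by linarith)]
      norm_num
    have hGcont : Continuous G := by
      have hGfun : G = fun x => lam₀ * F₀ (x - mu₁₀) + (1 - lam₀) * F₀ (x - mu₂₀) := funext hG
      rw [hGfun]
      have hFc : Continuous F₀ := hL.continuous
      fun_prop
    have hGθcont : ∀ θ ∈ Θ, Continuous (Gθ θ) := by
      intro θ hθ
      have hlipθ : LipschitzWith (Real.toNNReal c₁) (Gθ θ) := by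
        apply LipschitzWith.of_dist_le_mul
        intro x y
        have hk := key θ hθ θ hθ x y
        simp only [sub_self, abs_zero, add_zero, zero_add] at hk
        rw [Real.dist_eq, Real.dist_eq, Real.coe_toNNReal c₁ hc₁0]
        exact hk
      exact hlipθ.continuous
    have hGθb : ∀ θ ∈ Θ, ∀ x, |Gθ θ x| ≤ 1 + BH := by
      intro θ hθ x
      obtain ⟨h0, h1⟩ := hmem θ hθ
      rw [hGθ]
      simp only [Aop, Sr]
      have hv1 : |1 - Ainv θ.1 θ.2.1 θ.2.2 G (-(x - θ.2.1))| ≤ 1 + BH := by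
        refine (abs_sub _ _).trans ?_
        simp only [abs_one]
        linarith [habs θ hθ (-(x - θ.2.1))]
      have hv2 : |1 - Ainv θ.1 θ.2.1 θ.2.2 G (-(x - θ.2.2))| ≤ 1 + BH := by
        refine (abs_sub _ _).trans ?_
        simp only [abs_one]
        linarith [habs θ hθ (-(x - θ.2.2))]
      refine (abs_add_le _ _).trans ?_
      rw [abs_mul, abs_mul, abs_of_nonneg h0,
        abs_of_nonneg (by linarith : (0:ℝ) ≤ 1 - θ.1)]
      nlinarith [mul_le_mul_of_nonneg_left hv1 h0,
        mul_le_mul_of_nonneg_left hv2 (by linarith : (0:ℝ) ≤ 1 - θ.1)]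
    have hint : ∀ θ ∈ Θ, Integrable (fun x => (Gθ θ x - G x)^2) P := by
      intro θ hθ
      refine Integrable.mono' (integrable_const ((2 + BH)^2)) ?_ (Filter.Eventually.of_forall ?_)
      · exact (((hGθcont θ hθ).sub hGcont).pow 2).aestronglyMeasurable
      · intro x
        rw [Real.norm_eq_abs, abs_pow]
        have h1 : |Gθ θ x - G x| ≤ 2 + BH :=
          (abs_sub _ _).trans (by linarith [hGθb θ hθ x, hGb x])
        exact pow_le_pow_left₀ (abs_nonneg _) h1 2
    have hC20 : (0:ℝ) ≤ 2 * (2 + BH) * c₁ := by nlinarith [mul_nonneg hBH0 hc₁0]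
    refine ⟨3 * (2 * (2 + BH) * c₁), by linarith, ?_⟩
    intro θ hθ θ' hθ'
    have hδ0 : (0:ℝ) ≤ |θ.1 - θ'.1| + |θ.2.1 - θ'.2.1| + |θ.2.2 - θ'.2.2| := by positivity
    have hptw : ∀ x : ℝ, |(Gθ θ x - G x)^2 - (Gθ θ' x - G x)^2| ≤
        (2 * (2 + BH) * c₁) * (|θ.1 - θ'.1| + |θ.2.1 - θ'.2.1| + |θ.2.2 - θ'.2.2|) := by
      intro x
      have hk := key θ hθ θ' hθ' x x
      rw [sub_self, abs_zero, add_zero] at hk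
      have hsq : (Gθ θ x - G x)^2 - (Gθ θ' x - G x)^2
          = (Gθ θ x - Gθ θ' x) * ((Gθ θ x - G x) + (Gθ θ' x - G x)) := by ring
      rw [hsq, abs_mul]
      have h2 : |(Gθ θ x - G x) + (Gθ θ' x - G x)| ≤ 2 * (2 + BH) := by
        refine (abs_add_le _ _).trans ?_
        have b1 : |Gθ θ x - G x| ≤ 2 + BH :=
          (abs_sub _ _).trans (by linarith [hGθb θ hθ x, hGb x])
        have b2 : |Gθ θ' x - G x| ≤ 2 + BH :=
          (abs_sub _ _).trans (by linarith [hGθb θ' hθ' x, hGb x])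
        linarith
      calc |Gθ θ x - Gθ θ' x| * |(Gθ θ x - G x) + (Gθ θ' x - G x)|
          ≤ (c₁ * (|θ.1 - θ'.1| + |θ.2.1 - θ'.2.1| + |θ.2.2 - θ'.2.2|)) * (2 * (2 + BH)) :=
            mul_le_mul hk h2 (abs_nonneg _) (mul_nonneg hc₁0 hδ0)
        _ = (2 * (2 + BH) * c₁) * (|θ.1 - θ'.1| + |θ.2.1 - θ'.2.1| + |θ.2.2 - θ'.2.2|) := by
            ring
    have hi := hint θ hθ
    have hi' := hint θ' hθ'
    rw [hK, hK, ← integral_sub hi hi']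
    have habs1 : |∫ x, ((Gθ θ x - G x)^2 - (Gθ θ' x - G x)^2) ∂P| ≤
        ∫ x, |(Gθ θ x - G x)^2 - (Gθ θ' x - G x)^2| ∂P := by
      have := MeasureTheory.norm_integral_le_integral_norm
        (μ := P) (f := fun x => (Gθ θ x - G x)^2 - (Gθ θ' x - G x)^2)
      simpa [Real.norm_eq_abs] using this
    have hmono2 : ∫ x, |(Gθ θ x - G x)^2 - (Gθ θ' x - G x)^2| ∂P ≤
        ∫ _x : ℝ, (2 * (2 + BH) * c₁) *
          (|θ.1 - θ'.1| + |θ.2.1 - θ'.2.1| + |θ.2.2 - θ'.2.2|) ∂P :=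
      integral_mono (hi.sub hi').abs (integrable_const _) hptw
    rw [integral_const, probReal_univ, one_smul] at hmono2
    refine (habs1.trans hmono2).trans ?_
    calc (2 * (2 + BH) * c₁) * (|θ.1 - θ'.1| + |θ.2.1 - θ'.2.1| + |θ.2.2 - θ'.2.2|)
        ≤ (2 * (2 + BH) * c₁) * (3 * enorm3 (θ - θ')) :=
          mul_le_mul_of_nonneg_left (hen θ θ') hC20
      _ = 3 * (2 * (2 + BH) * c₁) * enorm3 (θ - θ') := by ring
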